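/- Let P_0 and R_0 be non-isomorphic posets, each of size m, and let i > m. Then the set D_{m+i+1}(P_iR_i) has a witness (namely P_iR_i itself), it consists of k = C(P_0R_0) + ⌈(i−m)/2⌉ isomorphism classes of posets of size n = m+i+1, its smallest witness has size |P_iR_i| = 2m + 2i, and for any constant c ∈ ℕ, the smallest witness size 2m + 2i is strictly greater than n + k + c whenever i − ⌈(i−m)/2⌉ > 1 + C(P_0R_0) − m + c. -/

import Mathlib

/-!
Formalization framework: finite posets are bundled as `FinPartOrd.{0}`, downsets are
`Finset`s of elements, unlabelled posets are isomorphism classes (`UPoset`), and a witness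
of a set `Γ` of unlabelled posets at size `n` is a finite poset whose set of size-`n`
downsets, up to isomorphism, is exactly `Γ`.
-/

attribute [local instance] Classical.propDecidable

noncomputable section

open Finset

/-- `D` is a downset of the finite poset `Q`. -/
def IsDownset (Q : FinPartOrd.{0}) (D : Finset ↥Q) : Prop :=
  ∀ ⦃a b : ↥Q⦄, a ∈ D → b ≤ a → b ∈ D

/-- The induced subposet of `Q` on a finset `D` of its elements. -/
def subposet (Q : FinPartOrd.{0}) (D : Finset ↥Q) : FinPartOrd.{0} :=
  FinPartOrd.of {x : ↥Q // x ∈ D}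

/-- The isomorphism setoid on finite posets. -/
def isoSetoid : Setoid FinPartOrd.{0} where
  r P Q := Nonempty (↥P ≃o ↥Q)
  iseqv := ⟨fun _ => ⟨OrderIso.refl _⟩, fun ⟨e⟩ => ⟨e.symm⟩, fun ⟨e⟩ ⟨f⟩ => ⟨e.trans f⟩⟩

/-- Unlabelled finite posets: isomorphism classes of finite posets. -/
def UPoset := Quotient isoSetoid

/-- The isomorphism class of a finite poset. -/
def cls (P : FinPartOrd.{0}) : UPoset := Quotient.mk isoSetoid P

/-- The number of elements of a finite poset. -/
def size (Q : FinPartOrd.{0}) : ℕ := Fintype.card ↥Q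

/-- The size of an isomorphism class of finite posets. -/
def usize : UPoset → ℕ :=
  Quotient.lift size fun _ _ h => h.elim fun e => Fintype.card_congr e.toEquiv

/-- `D_n(Q)` : the set of downsets of `Q` of size `n`, up to isomorphism. -/
def DSet (n : ℕ) (Q : FinPartOrd.{0}) : Set UPoset :=
  {c | ∃ D : Finset ↥Q, IsDownset Q D ∧ D.card = n ∧ cls (subposet Q D) = c}

/-- `d_n(Q)` : the number of isomorphism classes of downsets of `Q` of size `n`. -/
def dNum (n : ℕ) (Q : FinPartOrd.{0}) : ℕ := (DSet n Q).ncard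

/-- `D(Q)` : the set of nonempty downsets of `Q`, up to isomorphism. -/
def DAllSet (Q : FinPartOrd.{0}) : Set UPoset :=
  {c | ∃ D : Finset ↥Q, IsDownset Q D ∧ D.Nonempty ∧ cls (subposet Q D) = c}

/-- `Q` is a witness of the set `Γ` of unlabelled posets (at size `n`): the set of size-`n`
downsets of `Q`, up to isomorphism, is exactly `Γ`. -/
def IsWitness (n : ℕ) (Γ : Set UPoset) (Q : FinPartOrd.{0}) : Prop := DSet n Q = Γ

/-- `Q` is a minimal witness of `Γ` : `Q` is a witness and no proper downset of `Q` is
itself a witness of `Γ`. -/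
def IsMinimalWitness (n : ℕ) (Γ : Set UPoset) (Q : FinPartOrd.{0}) : Prop :=
  IsWitness n Γ Q ∧
    ∀ D : Finset ↥Q, IsDownset Q D → D ≠ Finset.univ → ¬IsWitness n Γ (subposet Q D)

/-- The height of an element: the number of elements of a longest chain whose maximum is `x`. -/
def heightEl (Q : FinPartOrd.{0}) (x : ↥Q) : ℕ :=
  sSup {k | ∃ c : Finset ↥Q, IsChain (· ≤ ·) (c : Set ↥Q) ∧ x ∈ c ∧ (∀ y ∈ c, y ≤ x) ∧ c.card = k}

/-- The height of a finite poset: the number of elements of a longest chain. -/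
def posetHeight (Q : FinPartOrd.{0}) : ℕ :=
  sSup {k | ∃ c : Finset ↥Q, IsChain (· ≤ ·) (c : Set ↥Q) ∧ c.card = k}

/-- A finite poset is Newtonian if every element of level `i` covers every element of
level `i - 1`. -/
def Newtonian (Q : FinPartOrd.{0}) : Prop :=
  ∀ x y : ↥Q, heightEl Q y = heightEl Q x + 1 → x ⋖ y

/-- A finite poset is connected if it is nonempty and any two elements are joined by a
comparability path. -/
def ConnectedPoset (Q : FinPartOrd.{0}) : Prop :=
  Nonempty ↥Q ∧ ∀ x y : ↥Q, Relation.ReflTransGen (fun a b : ↥Q => a ≤ b ∨ b ≤ a) x y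

/-- `x` is a maximal element of the subset `W` of `Q`. -/
def IsMaxIn (Q : FinPartOrd.{0}) (W : Finset ↥Q) (x : ↥Q) : Prop :=
  x ∈ W ∧ ∀ y ∈ W, x ≤ y → y = x

/-- `x` is a maximal element of the finite poset `R`. -/
def IsMaxEl (R : FinPartOrd.{0}) (x : ↥R) : Prop := ∀ y, x ≤ y → y = x

/-- A poset of type 𝒲 : the disjoint union of two connected Newtonian posets that are not
isomorphic, but which only differ in one maximal element (they become isomorphic after the
removal of a suitable maximal element from each). -/
def TypeW (P : FinPartOrd.{0}) : Prop :=
  ∃ W₁ W₂ : Finset ↥P,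
    W₁ ∪ W₂ = Finset.univ ∧ Disjoint W₁ W₂ ∧
    (∀ x ∈ W₁, ∀ y ∈ W₂, ¬x ≤ y ∧ ¬y ≤ x) ∧
    ConnectedPoset (subposet P W₁) ∧ ConnectedPoset (subposet P W₂) ∧
    Newtonian (subposet P W₁) ∧ Newtonian (subposet P W₂) ∧
    ¬Nonempty (↥(subposet P W₁) ≃o ↥(subposet P W₂)) ∧
    ∃ x y, IsMaxIn P W₁ x ∧ IsMaxIn P W₂ y ∧
      Nonempty (↥(subposet P (W₁.erase x)) ≃o ↥(subposet P (W₂.erase y)))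

/-- An antichain on `i` elements. -/
def AntichainFin (i : ℕ) : Type := Fin i

instance (i : ℕ) : PartialOrder (AntichainFin i) where
  le x y := x = y
  le_refl _ := rfl
  le_trans a b c h₁ h₂ := show a = c from (show a = b from h₁).trans (show b = c from h₂)
  le_antisymm _ _ h _ := h

instance (i : ℕ) : Fintype (AntichainFin i) := inferInstanceAs (Fintype (Fin i))
instance (i : ℕ) : Fintype (WithTop (AntichainFin i)) :=
  inferInstanceAs (Fintype (Option (Fin i)))

/-- `Λ_i`: the poset with `i` minimal elements and one maximal element above all of them. -/
def Lambda (i : ℕ) : FinPartOrd.{0} := FinPartOrd.of (WithTop (AntichainFin i))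

/-- `k` disjoint copies of a poset `α`. -/
def Copies (k : ℕ) (α : Type) : Type := Fin k × α

instance (k : ℕ) (α : Type) [PartialOrder α] : PartialOrder (Copies k α) where
  le x y := x.1 = y.1 ∧ x.2 ≤ y.2
  le_refl _ := ⟨rfl, le_refl _⟩
  le_trans _ _ _ h₁ h₂ := ⟨h₁.1.trans h₂.1, le_trans h₁.2 h₂.2⟩
  le_antisymm x y h₁ h₂ := by
    obtain ⟨x₁, x₂⟩ := x
    obtain ⟨y₁, y₂⟩ := y
    obtain ⟨h, h'⟩ := h₁
    cases h
    exact congrArg _ (le_antisymm h' h₂.2)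

instance (k : ℕ) (α : Type) [Fintype α] : Fintype (Copies k α) :=
  inferInstanceAs (Fintype (Fin k × α))

/-- `H_ℓ`: the poset whose connected components are `ℓ` copies of `Λ₂` and one copy of
`Λ_{3(ℓ-1)}`. -/
def Hposet (ℓ : ℕ) : FinPartOrd.{0} :=
  FinPartOrd.of (Copies ℓ (WithTop (AntichainFin 2)) ⊕ WithTop (AntichainFin (3 * (ℓ - 1))))

/-- The poset `P₀` placed above a chain of `i` elements. -/
def withChain (P₀ : FinPartOrd.{0}) (i : ℕ) : FinPartOrd.{0} :=
  FinPartOrd.of (Fin i ⊕ₗ ↥P₀)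

/-- The disjoint union of two finite posets. -/
def disjSum (P R : FinPartOrd.{0}) : FinPartOrd.{0} := FinPartOrd.of (↥P ⊕ ↥R)

/-- The poset `P_iR_i`: the disjoint union of `P₀` and `R₀` each placed above a chain of
`i` elements. -/
def PRposet (P₀ R₀ : FinPartOrd.{0}) (i : ℕ) : FinPartOrd.{0} :=
  disjSum (withChain P₀ i) (withChain R₀ i)

/-- `C(P₀R₀) = |D(P₀)| + |D(R₀)| − |D(P₀) ∩ D(R₀)|`. -/
def CNum (P₀ R₀ : FinPartOrd.{0}) : ℕ :=
  (DAllSet P₀).ncard + (DAllSet R₀).ncard - (DAllSet P₀ ∩ DAllSet R₀).ncard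

/-- The vertices of the exchange graph: the downsets of `Q` of size `n`, as actual subsets. -/
def EGVert (n : ℕ) (Q : FinPartOrd.{0}) : Type :=
  {D : Finset ↥Q // IsDownset Q D ∧ D.card = n}

/-- The exchange graph `G_n(Q)`: two size-`n` downsets are adjacent iff they differ by
exactly one element. -/
def ExchangeGraph (n : ℕ) (Q : FinPartOrd.{0}) : SimpleGraph (EGVert n Q) where
  Adj X Y := (X.1 \ Y.1).card = 1 ∧ (Y.1 \ X.1).card = 1
  symm := ⟨fun X Y h => ⟨h.2, h.1⟩⟩
  loopless := ⟨fun X h => by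
    simp only [Finset.sdiff_self, Finset.card_empty] at h
    exact absurd h.1 (by simp)⟩

/-- The downset `D` of `Q`, viewed as a poset, is isomorphic (a "copy of") `P`. -/
def IsoTo (Q : FinPartOrd.{0}) (D : Finset ↥Q) (P : FinPartOrd.{0}) : Prop :=
  Nonempty (↥(subposet Q D) ≃o ↥P)

/-- A path `A :: M ++ [C]` in the exchange graph `G_n(Q)` whose first vertex is a copy of
`Pa`, whose last vertex is a copy of `Pb`, and all of whose internal vertices are copies of
`Pmid`. -/
def SpecialPath (n : ℕ) (Q : FinPartOrd.{0}) (Pa Pmid Pb : FinPartOrd.{0})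
    (A : EGVert n Q) (M : List (EGVert n Q)) (C : EGVert n Q) : Prop :=
  List.Chain' (ExchangeGraph n Q).Adj (A :: M ++ [C]) ∧
    IsoTo Q A.1 Pa ∧ IsoTo Q C.1 Pb ∧ ∀ v ∈ M, IsoTo Q v.1 Pmid

/-- `T` is an antichain in `Q`. -/
def IsAntichainIn (Q : FinPartOrd.{0}) (T : Finset ↥Q) : Prop :=
  ∀ x ∈ T, ∀ y ∈ T, x ≤ y → x = y

/-- The possible shapes of `A \ X` and `C \ X`: an antichain possibly together with a single
element below all of it and/or a single element above all of it, or a two-element chain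
together with one incomparable element. -/
def GoodForm (Q : FinPartOrd.{0}) (S : Finset ↥Q) : Prop :=
  (∃ T : Finset ↥Q, IsAntichainIn Q T ∧
    (S = T ∨
      (∃ b, b ∉ T ∧ S = insert b T ∧ ∀ x ∈ T, b < x) ∨
      (∃ t, t ∉ T ∧ S = insert t T ∧ ∀ x ∈ T, x < t) ∨
      (∃ b t, b ∉ T ∧ t ∉ T ∧ b ≠ t ∧ S = insert b (insert t T) ∧
        (∀ x ∈ T, b < x) ∧ ∀ x ∈ T, x < t))) ∨
  (∃ x y z : ↥Q, S = {x, y, z} ∧ x ≠ y ∧ x ≠ z ∧ y ≠ z ∧ x < y ∧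
    ¬x ≤ z ∧ ¬z ≤ x ∧ ¬y ≤ z ∧ ¬z ≤ y)

section Base

lemma cls_eq_iff {P Q : FinPartOrd.{0}} : cls P = cls Q ↔ Nonempty (↥P ≃o ↥Q) :=
  ⟨fun h => Quotient.exact h, fun h => Quotient.sound h⟩

lemma usize_cls (P : FinPartOrd.{0}) : usize (cls P) = size P := rfl

lemma size_subposet (Q : FinPartOrd.{0}) (D : Finset ↥Q) : size (subposet Q D) = D.card :=
  (Fintype.card_congr (Equiv.refl _)).trans (Fintype.card_coe D)

lemma size_PR (P₀ R₀ : FinPartOrd.{0}) (i : ℕ) :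
    size (PRposet P₀ R₀ i) = (i + size P₀) + (i + size R₀) := by
  show Fintype.card ((Fin i ⊕ₗ ↥P₀) ⊕ (Fin i ⊕ₗ ↥R₀)) = _
  rw [Fintype.card_sum]
  have h1 : Fintype.card (Fin i ⊕ₗ ↥P₀) = i + size P₀ := by
    rw [Fintype.card_congr (ofLex : Fin i ⊕ₗ ↥P₀ ≃ Fin i ⊕ ↥P₀), Fintype.card_sum,
      Fintype.card_fin]; rfl
  have h2 : Fintype.card (Fin i ⊕ₗ ↥R₀) = i + size R₀ := by
    rw [Fintype.card_congr (ofLex : Fin i ⊕ₗ ↥R₀ ≃ Fin i ⊕ ↥R₀), Fintype.card_sum,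
      Fintype.card_fin]; rfl
  rw [h1, h2]

end Base
section Machinery

variable {α β γ δ : Type}

/-- Connectivity of a poset via comparability paths. -/
def Conn (α : Type) [LE α] : Prop :=
  Nonempty α ∧ ∀ x y : α, Relation.ReflTransGen (fun a b : α => a ≤ b ∨ b ≤ a) x y

lemma conn_of_orderIso [Preorder α] [Preorder β] (e : α ≃o β) (h : Conn α) : Conn β := by
  obtain ⟨⟨x⟩, hc⟩ := h
  refine ⟨⟨e x⟩, fun a b => ?_⟩
  have h2 := Relation.ReflTransGen.lift (p := fun a b : β => a ≤ b ∨ b ≤ a) (fun z => e z)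
    (fun u v (huv : u ≤ v ∨ v ≤ u) => huv.imp (fun h' => e.le_iff_le.mpr h') (fun h' => e.le_iff_le.mpr h'))
    _ _ (hc (e.symm a) (e.symm b))
  simpa [Function.onFun] using h2

lemma comp_side [LE α] [LE β] {x y : α ⊕ β} (h : x ≤ y ∨ y ≤ x) : x.isLeft = y.isLeft := by
  rcases h with h | h <;> rcases h with ⟨_⟩ | ⟨_⟩ <;> rfl

lemma rtg_side [LE α] [LE β] {x y : α ⊕ β}
    (h : Relation.ReflTransGen (fun a b : α ⊕ β => a ≤ b ∨ b ≤ a) x y) :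
    x.isLeft = y.isLeft := by
  induction h with
  | refl => rfl
  | tail _ hstep ih => exact ih.trans (comp_side hstep)

/-- Build an iso of left summands from an iso of sums which matches left with left. -/
noncomputable def isoLeftOf [Preorder α] [Preorder β] [Preorder γ] [Preorder δ]
    (e : (α ⊕ β) ≃o (γ ⊕ δ))
    (h1 : ∀ a : α, ∃ c, e (Sum.inl a) = Sum.inl c)
    (h2 : ∀ c : γ, ∃ a, e.symm (Sum.inl c) = Sum.inl a) : α ≃o γ where
  toFun a := (h1 a).choose
  invFun c := (h2 c).choose
  left_inv a := by
    have hs := (h1 a).choose_spec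
    have h' := (h2 (h1 a).choose).choose_spec
    have h'' : Sum.inl (β := β) ((h2 (h1 a).choose).choose) = Sum.inl a := by
      rw [← h', ← hs, e.symm_apply_apply]
    exact Sum.inl.inj h''
  right_inv c := by
    have hs := (h2 c).choose_spec
    have h' := (h1 (h2 c).choose).choose_spec
    have h'' : Sum.inl (β := δ) ((h1 (h2 c).choose).choose) = Sum.inl c := by
      rw [← h', ← hs, e.apply_symm_apply]
    exact Sum.inl.inj h''
  map_rel_iff' := by
    intro a a'
    show (h1 a).choose ≤ (h1 a').choose ↔ a ≤ a'
    constructor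
    · intro h
      have h3 : e (Sum.inl a) ≤ e (Sum.inl a') := by
        rw [(h1 a).choose_spec, (h1 a').choose_spec]
        exact Sum.inl_le_inl_iff.mpr h
      exact Sum.inl_le_inl_iff.mp (e.le_iff_le.mp h3)
    · intro h
      have h3 : e (Sum.inl a) ≤ e (Sum.inl a') := e.le_iff_le.mpr (Sum.inl_le_inl_iff.mpr h)
      rw [(h1 a).choose_spec, (h1 a').choose_spec] at h3
      exact Sum.inl_le_inl_iff.mp h3

lemma sum_iso_main [Preorder α] [Preorder β] [Preorder γ] [Preorder δ]
    (e : (α ⊕ β) ≃o (γ ⊕ δ))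
    (hA : ∀ a : α, ∃ c, e (Sum.inl a) = Sum.inl c)
    (hB : ∀ b : β, ∃ d, e (Sum.inr b) = Sum.inr d) :
    Nonempty (α ≃o γ) ∧ Nonempty (β ≃o δ) := by
  have h2 : ∀ c : γ, ∃ a, e.symm (Sum.inl c) = Sum.inl a := by
    intro c
    rcases h : e.symm (Sum.inl c) with a | b
    · exact ⟨a, rfl⟩
    · exfalso
      obtain ⟨d, hd⟩ := hB b
      have : Sum.inl (α := γ) c = Sum.inr d := by
        rw [← hd, ← h, e.apply_symm_apply]
      exact Sum.inl_ne_inr this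
  refine ⟨⟨isoLeftOf e hA h2⟩, ?_⟩
  let e' : (β ⊕ α) ≃o (δ ⊕ γ) := ((OrderIso.sumComm β α).trans e).trans (OrderIso.sumComm γ δ)
  have hcomm1 : ∀ b : β, (OrderIso.sumComm β α) (Sum.inl b) = Sum.inr b := fun _ => rfl
  have hA' : ∀ b : β, ∃ d, e' (Sum.inl b) = Sum.inl d := by
    intro b
    obtain ⟨d, hd⟩ := hB b
    refine ⟨d, ?_⟩
    show (OrderIso.sumComm γ δ) (e ((OrderIso.sumComm β α) (Sum.inl b))) = Sum.inl d
    rw [hcomm1, hd]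
    rfl
  have h2' : ∀ d : δ, ∃ b, e'.symm (Sum.inl d) = Sum.inl b := by
    intro d
    have hsm : e'.symm (Sum.inl d) = (OrderIso.sumComm β α).symm (e.symm (Sum.inr d)) := rfl
    rcases h : e.symm (Sum.inr (α := γ) d) with a | b
    · exfalso
      obtain ⟨c, hc⟩ := hA a
      have : Sum.inr (α := γ) d = Sum.inl c := by
        rw [← hc, ← h, e.apply_symm_apply]
      exact Sum.inr_ne_inl this
    · exact ⟨b, by rw [hsm, h]; rfl⟩
  exact ⟨isoLeftOf e' hA' h2'⟩

lemma sum_iso_cases [Preorder α] [Preorder β] [Preorder γ] [Preorder δ]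
    (hα : Conn α) (hβ : Conn β) (hγ : Nonempty γ) (hδ : Nonempty δ)
    (e : (α ⊕ β) ≃o (γ ⊕ δ)) :
    (Nonempty (α ≃o γ) ∧ Nonempty (β ≃o δ)) ∨ (Nonempty (α ≃o δ) ∧ Nonempty (β ≃o γ)) := by
  obtain ⟨⟨x₀⟩, hcA⟩ := hα
  obtain ⟨⟨y₀⟩, hcB⟩ := hβ
  have hsideA : ∀ a : α, (e (Sum.inl a)).isLeft = (e (Sum.inl x₀)).isLeft := by
    intro a
    refine rtg_side (Relation.ReflTransGen.lift
      (p := fun u v : γ ⊕ δ => u ≤ v ∨ v ≤ u) (fun z : α => e (Sum.inl z))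
      (fun u v (huv : u ≤ v ∨ v ≤ u) => huv.imp (fun h' => e.le_iff_le.mpr (Sum.inl_le_inl_iff.mpr h'))
        (fun h' => e.le_iff_le.mpr (Sum.inl_le_inl_iff.mpr h'))) _ _ (hcA a x₀))
  have hsideB : ∀ b : β, (e (Sum.inr b)).isLeft = (e (Sum.inr y₀)).isLeft := by
    intro b
    refine rtg_side (Relation.ReflTransGen.lift
      (p := fun u v : γ ⊕ δ => u ≤ v ∨ v ≤ u) (fun z : β => e (Sum.inr z))
      (fun u v (huv : u ≤ v ∨ v ≤ u) => huv.imp (fun h' => e.le_iff_le.mpr (Sum.inr_le_inr_iff.mpr h'))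
        (fun h' => e.le_iff_le.mpr (Sum.inr_le_inr_iff.mpr h'))) _ _ (hcB b y₀))
  have hne : (e (Sum.inl x₀)).isLeft ≠ (e (Sum.inr y₀)).isLeft := by
    intro hEq
    have hall : ∀ z : α ⊕ β, (e z).isLeft = (e (Sum.inl x₀)).isLeft := by
      rintro (a | b)
      · exact hsideA a
      · exact (hsideB b).trans hEq.symm
    rcases h : (e (Sum.inl x₀)).isLeft with _ | _
    · obtain ⟨c⟩ := hγ
      have h1 := hall (e.symm (Sum.inl c))
      rw [e.apply_symm_apply, h] at h1
      simp at h1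
    · obtain ⟨d⟩ := hδ
      have h1 := hall (e.symm (Sum.inr d))
      rw [e.apply_symm_apply, h] at h1
      simp at h1
  rcases h : (e (Sum.inl x₀)).isLeft with _ | _
  · -- inl-image on the right: cross case
    right
    have hA : ∀ a : α, ∃ d, e (Sum.inl a) = Sum.inr d := by
      intro a
      have := (hsideA a).trans h
      rcases h' : e (Sum.inl a) with c | d
      · rw [h'] at this; simp at this
      · exact ⟨d, rfl⟩
    have hB : ∀ b : β, ∃ c, e (Sum.inr b) = Sum.inl c := by
      intro b
      have h1 := hsideB b
      have h2 : (e (Sum.inr y₀)).isLeft = true := by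
        rcases h3 : (e (Sum.inr y₀)).isLeft with _ | _
        · exact absurd (h.trans h3.symm) hne
        · rfl
      rw [h2] at h1
      rcases h' : e (Sum.inr b) with c | d
      · exact ⟨c, rfl⟩
      · rw [h'] at h1; simp at h1
    -- compose with sumComm on target to apply sum_iso_main
    let e2 : (α ⊕ β) ≃o (δ ⊕ γ) := e.trans (OrderIso.sumComm γ δ)
    have hA2 : ∀ a : α, ∃ d, e2 (Sum.inl a) = Sum.inl d := by
      intro a
      obtain ⟨d, hd⟩ := hA a
      exact ⟨d, by show (OrderIso.sumComm γ δ) (e (Sum.inl a)) = _; rw [hd]; rfl⟩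
    have hB2 : ∀ b : β, ∃ c, e2 (Sum.inr b) = Sum.inr c := by
      intro b
      obtain ⟨c, hc⟩ := hB b
      exact ⟨c, by show (OrderIso.sumComm γ δ) (e (Sum.inr b)) = _; rw [hc]; rfl⟩
    exact (sum_iso_main e2 hA2 hB2)
  · left
    have hA : ∀ a : α, ∃ c, e (Sum.inl a) = Sum.inl c := by
      intro a
      have h1 := (hsideA a).trans h
      rcases h' : e (Sum.inl a) with c | d
      · exact ⟨c, rfl⟩
      · rw [h'] at h1; simp at h1
    have hB : ∀ b : β, ∃ d, e (Sum.inr b) = Sum.inr d := by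
      intro b
      have h2 : (e (Sum.inr y₀)).isLeft = false := by
        rcases h3 : (e (Sum.inr y₀)).isLeft with _ | _
        · rfl
        · exact absurd (h.trans h3.symm) hne
      have h1 := (hsideB b).trans h2
      rcases h' : e (Sum.inr b) with c | d
      · rw [h'] at h1; simp at h1
      · exact ⟨d, rfl⟩
    exact sum_iso_main e hA hB

end Machinery
section Cancel

variable {α β P R : Type}

def nAbove [Preorder α] [Fintype α] (x : α) : ℕ := Fintype.card {y // ¬ x ≤ y}

lemma nAbove_iso [Preorder α] [Preorder β] [Fintype α] [Fintype β] (e : α ≃o β) (x : α) :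
    nAbove (e x) = nAbove x :=
  (Fintype.card_congr (Equiv.subtypeEquiv e.toEquiv (fun y => by
    simp only [not_iff_not]
    exact e.le_iff_le.symm))).symm

lemma nAbove_inl [PartialOrder P] [Fintype P] {i : ℕ} (j : Fin i) :
    nAbove (toLex (Sum.inl j) : Fin i ⊕ₗ P) < i := by
  have h1 : nAbove (toLex (Sum.inl j) : Fin i ⊕ₗ P) =
      Fintype.card {y : Fin i ⊕ P // ¬ toLex (Sum.inl j) ≤ toLex y} :=
    Fintype.card_congr (Equiv.subtypeEquiv (ofLex (α := Fin i ⊕ P)).symm.symm (fun y => Iff.rfl)).symm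
  rw [h1]
  have h2 : Fintype.card {y : Fin i ⊕ P // ¬ toLex (Sum.inl j) ≤ toLex y} =
      Fintype.card {k : Fin i // ¬ toLex (Sum.inl (β := P) j) ≤ toLex (Sum.inl k)} +
      Fintype.card {p : P // ¬ toLex (Sum.inl (β := P) j) ≤ toLex (Sum.inr p)} := by
    rw [Fintype.card_congr (Equiv.subtypeSum
      (p := fun y : Fin i ⊕ P => ¬ toLex (Sum.inl j) ≤ toLex y)), Fintype.card_sum]
  rw [h2]
  have h3 : Fintype.card {p : P // ¬ toLex (Sum.inl (β := P) j) ≤ toLex (Sum.inr p)} = 0 := by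
    refine Fintype.card_eq_zero_iff.mpr ⟨fun y => y.2 (Sum.Lex.inl_le_inr _ _)⟩
  have h4 : Fintype.card {k : Fin i // ¬ toLex (Sum.inl (β := P) j) ≤ toLex (Sum.inl k)} =
      Fintype.card {k : Fin i // k < j} := by
    refine Fintype.card_congr (Equiv.subtypeEquiv (Equiv.refl _) (fun k => ?_))
    simp only [Equiv.refl_apply]
    rw [Sum.Lex.inl_le_inl_iff, not_le]
  have h5 : Fintype.card {k : Fin i // k < j} ≤ Fintype.card (Set.Iio j) :=
    le_of_eq (Fintype.card_congr (Equiv.refl _))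
  have h6 : Fintype.card (Set.Iio j) = j := by simp
  have hj := j.2
  omega

lemma nAbove_inr [PartialOrder P] [Fintype P] {i : ℕ} (p : P) :
    i ≤ nAbove (toLex (Sum.inr p) : Fin i ⊕ₗ P) := by
  have : Function.Injective (fun k : Fin i =>
      (⟨toLex (Sum.inl k), Sum.Lex.not_inr_le_inl⟩ :
        {y : Fin i ⊕ₗ P // ¬ toLex (Sum.inr p) ≤ y})) := by
    intro k k' h
    have := congrArg (fun z => (ofLex z.1)) h
    simpa using this
  have hle := Fintype.card_le_of_injective _ this
  rw [Fintype.card_fin] at hle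
  exact hle

/-- Build an iso of the top parts of two lex sums matching inr with inr. -/
noncomputable def isoInrLexOf [Preorder P] [Preorder R] {i : ℕ}
    (e : (Fin i ⊕ₗ P) ≃o (Fin i ⊕ₗ R))
    (h1 : ∀ p : P, ∃ r, e (toLex (Sum.inr p)) = toLex (Sum.inr r))
    (h2 : ∀ r : R, ∃ p, e.symm (toLex (Sum.inr r)) = toLex (Sum.inr p)) : P ≃o R where
  toFun p := (h1 p).choose
  invFun r := (h2 r).choose
  left_inv p := by
    have hs := (h1 p).choose_spec
    have h' := (h2 (h1 p).choose).choose_spec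
    have h'' : toLex (Sum.inr (α := Fin i) ((h2 (h1 p).choose).choose)) = toLex (Sum.inr p) := by
      rw [← h', ← hs, e.symm_apply_apply]
    exact Sum.inr.inj (toLex.injective h'')
  right_inv r := by
    have hs := (h2 r).choose_spec
    have h' := (h1 (h2 r).choose).choose_spec
    have h'' : toLex (Sum.inr (α := Fin i) ((h1 (h2 r).choose).choose)) = toLex (Sum.inr r) := by
      rw [← h', ← hs, e.apply_symm_apply]
    exact Sum.inr.inj (toLex.injective h'')
  map_rel_iff' := by
    intro p p'
    show (h1 p).choose ≤ (h1 p').choose ↔ p ≤ p'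
    constructor
    · intro h
      have h3 : e (toLex (Sum.inr p)) ≤ e (toLex (Sum.inr p')) := by
        rw [(h1 p).choose_spec, (h1 p').choose_spec]
        exact Sum.Lex.inr_le_inr_iff.mpr h
      exact Sum.Lex.inr_le_inr_iff.mp (e.le_iff_le.mp h3)
    · intro h
      have h3 : e (toLex (Sum.inr p)) ≤ e (toLex (Sum.inr p')) :=
        e.le_iff_le.mpr (Sum.Lex.inr_le_inr_iff.mpr h)
      rw [(h1 p).choose_spec, (h1 p').choose_spec] at h3
      exact Sum.Lex.inr_le_inr_iff.mp h3

lemma lex_cancel [PartialOrder P] [PartialOrder R] [Fintype P] [Fintype R] {i : ℕ}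
    (e : (Fin i ⊕ₗ P) ≃o (Fin i ⊕ₗ R)) : Nonempty (P ≃o R) := by
  have h1 : ∀ p : P, ∃ r, e (toLex (Sum.inr p)) = toLex (Sum.inr r) := by
    intro p
    rcases h : ofLex (e (toLex (Sum.inr p))) with j | r
    · exfalso
      have heq : e (toLex (Sum.inr p)) = toLex (Sum.inl j) := by
        rw [← h]; rfl
      have hh := nAbove_iso e (toLex (Sum.inr p))
      rw [heq] at hh
      have := nAbove_inl (P := R) j
      have := nAbove_inr (i := i) p
      omega
    · exact ⟨r, by rw [← h]; rfl⟩
  have h2 : ∀ r : R, ∃ p, e.symm (toLex (Sum.inr r)) = toLex (Sum.inr p) := by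
    intro r
    rcases h : ofLex (e.symm (toLex (Sum.inr r))) with j | p
    · exfalso
      have heq : e.symm (toLex (Sum.inr r)) = toLex (Sum.inl j) := by
        rw [← h]; rfl
      have hh := nAbove_iso e.symm (toLex (Sum.inr r))
      rw [heq] at hh
      have := nAbove_inl (P := P) j
      have := nAbove_inr (i := i) (P := R) r
      omega
    · exact ⟨p, by rw [← h]; rfl⟩
  exact ⟨isoInrLexOf e h1 h2⟩

end Cancel
section Plumb

variable {α β γ δ P : Type}

/-- downset predicate for plain finsets -/
def IsDS [LE α] (D : Finset α) : Prop := ∀ ⦃x y⦄, x ∈ D → y ≤ x → y ∈ D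

noncomputable def leftPart [Fintype α] (D : Finset (α ⊕ β)) : Finset α :=
  Finset.univ.filter (fun a => Sum.inl a ∈ D)

noncomputable def rightPart [Fintype β] (D : Finset (α ⊕ β)) : Finset β :=
  Finset.univ.filter (fun b => Sum.inr b ∈ D)

@[simp] lemma mem_leftPart [Fintype α] {D : Finset (α ⊕ β)} {a : α} :
    a ∈ leftPart D ↔ Sum.inl a ∈ D := by simp [leftPart]

@[simp] lemma mem_rightPart [Fintype β] {D : Finset (α ⊕ β)} {b : β} :
    b ∈ rightPart D ↔ Sum.inr b ∈ D := by simp [rightPart]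

lemma isDS_leftPart [Fintype α] [Preorder α] [Preorder β] {D : Finset (α ⊕ β)}
    (hD : IsDS D) : IsDS (leftPart D) := by
  intro x y hx hxy
  simp only [mem_leftPart] at hx ⊢
  exact hD hx (Sum.inl_le_inl_iff.mpr hxy)

lemma isDS_rightPart [Fintype β] [Preorder α] [Preorder β] {D : Finset (α ⊕ β)}
    (hD : IsDS D) : IsDS (rightPart D) := by
  intro x y hx hxy
  simp only [mem_rightPart] at hx ⊢
  exact hD hx (Sum.inr_le_inr_iff.mpr hxy)

/-- The subposet of a disjoint sum splits. -/
noncomputable def sumSplitIso [Fintype α] [Fintype β] [PartialOrder α] [PartialOrder β]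
    (D : Finset (α ⊕ β)) :
    ({a : α // a ∈ leftPart D} ⊕ {b : β // b ∈ rightPart D}) ≃o {x : α ⊕ β // x ∈ D} where
  toFun z := z.elim (fun a => ⟨Sum.inl a.1, mem_leftPart.mp a.2⟩)
    (fun b => ⟨Sum.inr b.1, mem_rightPart.mp b.2⟩)
  invFun x := match x with
    | ⟨Sum.inl a, h⟩ => Sum.inl ⟨a, mem_leftPart.mpr h⟩
    | ⟨Sum.inr b, h⟩ => Sum.inr ⟨b, mem_rightPart.mpr h⟩
  left_inv := by rintro (⟨a, ha⟩ | ⟨b, hb⟩) <;> rfl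
  right_inv := by rintro ⟨(a | b), h⟩ <;> rfl
  map_rel_iff' := by
    rintro (⟨a, ha⟩ | ⟨b, hb⟩) (⟨a', ha'⟩ | ⟨b', hb'⟩) <;>
      simp [Subtype.mk_le_mk, Sum.inl_le_inl_iff, Sum.inr_le_inr_iff,
        Sum.not_inl_le_inr, Sum.not_inr_le_inl]

lemma card_split [Fintype α] [Fintype β] [PartialOrder α] [PartialOrder β]
    (D : Finset (α ⊕ β)) : D.card = (leftPart D).card + (rightPart D).card := by
  classical
  rw [← Fintype.card_coe D, ← Fintype.card_coe (leftPart D), ← Fintype.card_coe (rightPart D),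
    ← Fintype.card_sum]
  exact Fintype.card_congr (sumSplitIso D).toEquiv.symm

/-- chain prefix downset of a lex sum -/
noncomputable def prefF (i : ℕ) (P : Type) [Fintype P] (a : ℕ) : Finset (Fin i ⊕ₗ P) :=
  (Finset.univ.filter (fun k : Fin i => k.1 < a)).image (fun k => toLex (Sum.inl k))

/-- full chain plus a downset of the top part -/
noncomputable def fullF (i : ℕ) {P : Type} [Fintype P] (E : Finset P) : Finset (Fin i ⊕ₗ P) :=
  Finset.univ.image (fun k : Fin i => toLex (Sum.inl k)) ∪ E.image (fun p => toLex (Sum.inr p))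

@[simp] lemma inl_mem_prefF [Fintype P] {i a : ℕ} {k : Fin i} :
    toLex (Sum.inl k : Fin i ⊕ P) ∈ prefF i P a ↔ k.1 < a := by
  constructor
  · intro h
    simp only [prefF, Finset.mem_image, Finset.mem_filter] at h
    obtain ⟨k', ⟨_, hk'⟩, heq⟩ := h
    have := toLex.injective heq
    cases Sum.inl.inj this
    exact hk'
  · intro h
    simp only [prefF, Finset.mem_image, Finset.mem_filter]
    exact ⟨k, ⟨Finset.mem_univ _, h⟩, rfl⟩

@[simp] lemma inr_mem_prefF [Fintype P] {i a : ℕ} {p : P} :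
    toLex (Sum.inr p : Fin i ⊕ P) ∈ prefF i P a ↔ False := by
  simp only [prefF, Finset.mem_image, Finset.mem_filter, iff_false]
  rintro ⟨k', _, heq⟩
  exact Sum.inl_ne_inr (toLex.injective heq)

@[simp] lemma inl_mem_fullF [Fintype P] {i : ℕ} {E : Finset P} {k : Fin i} :
    toLex (Sum.inl k : Fin i ⊕ P) ∈ fullF i E := by
  simp only [fullF, Finset.mem_union, Finset.mem_image]
  exact Or.inl ⟨k, Finset.mem_univ _, rfl⟩

@[simp] lemma inr_mem_fullF [Fintype P] {i : ℕ} {E : Finset P} {p : P} :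
    toLex (Sum.inr p : Fin i ⊕ P) ∈ fullF i E ↔ p ∈ E := by
  simp only [fullF, Finset.mem_union, Finset.mem_image]
  constructor
  · rintro (⟨k, _, heq⟩ | ⟨q, hq, heq⟩)
    · exact absurd (toLex.injective heq) (Sum.inl_ne_inr)
    · cases Sum.inr.inj (toLex.injective heq); exact hq
  · intro h; exact Or.inr ⟨p, h, rfl⟩

lemma isDS_prefF [Fintype P] [PartialOrder P] {i a : ℕ} : IsDS (prefF i P a) := by
  intro x y hx hxy
  rcases hx' : ofLex x with k | p
  · rcases hy' : ofLex y with k' | p'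
    · have hx2 : x = toLex (Sum.inl k) := by rw [← hx']; rfl
      have hy2 : y = toLex (Sum.inl k') := by rw [← hy']; rfl
      rw [hx2] at hx hxy
      rw [hy2] at hxy ⊢
      rw [inl_mem_prefF] at hx ⊢
      have := Sum.Lex.inl_le_inl_iff.mp hxy
      omega
    · have hx2 : x = toLex (Sum.inl k) := by rw [← hx']; rfl
      have hy2 : y = toLex (Sum.inr p') := by rw [← hy']; rfl
      rw [hx2] at hxy; rw [hy2] at hxy
      exact absurd hxy Sum.Lex.not_inr_le_inl
  · have hx2 : x = toLex (Sum.inr p) := by rw [← hx']; rfl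
    rw [hx2, inr_mem_prefF] at hx
    exact hx.elim

lemma isDS_fullF [Fintype P] [PartialOrder P] {i : ℕ} {E : Finset P} (hE : IsDS E) :
    IsDS (fullF i E) := by
  intro x y hx hxy
  rcases hy' : ofLex y with k' | p'
  · have hy2 : y = toLex (Sum.inl k') := by rw [← hy']; rfl
    rw [hy2]; exact inl_mem_fullF
  · have hy2 : y = toLex (Sum.inr p') := by rw [← hy']; rfl
    rcases hx' : ofLex x with k | p
    · have hx2 : x = toLex (Sum.inl k) := by rw [← hx']; rfl
      rw [hx2] at hxy; rw [hy2] at hxy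
      exact absurd hxy Sum.Lex.not_inr_le_inl
    · have hx2 : x = toLex (Sum.inr p) := by rw [← hx']; rfl
      rw [hx2, inr_mem_fullF] at hx
      rw [hy2, inr_mem_fullF]
      rw [hx2, hy2] at hxy
      exact hE hx (Sum.Lex.inr_le_inr_iff.mp hxy)

lemma card_prefF [Fintype P] {i a : ℕ} (h : a ≤ i) : (prefF i P a).card = a := by
  rw [prefF, Finset.card_image_of_injective _ (fun k k' hk =>
    Sum.inl.inj (toLex.injective hk))]
  have : Finset.univ.filter (fun k : Fin i => k.1 < a) =
      Finset.univ.image (Fin.castLE h) := by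
    ext k
    simp only [Finset.mem_filter, Finset.mem_univ, true_and, Finset.mem_image]
    constructor
    · intro hk; exact ⟨⟨k.1, hk⟩, rfl⟩
    · rintro ⟨j, rfl⟩; exact j.2
  rw [this, Finset.card_image_of_injective _ (Fin.castLE_injective h), Finset.card_univ,
    Fintype.card_fin]

lemma card_fullF [Fintype P] {i : ℕ} {E : Finset P} : (fullF i E).card = i + E.card := by
  rw [fullF, Finset.card_union_of_disjoint, Finset.card_image_of_injective _
    (fun k k' hk => Sum.inl.inj (toLex.injective hk)), Finset.card_image_of_injective _
    (fun p p' hp => Sum.inr.inj (toLex.injective hp)), Finset.card_univ, Fintype.card_fin]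
  rw [Finset.disjoint_left]
  rintro x hx hx'
  simp only [Finset.mem_image] at hx hx'
  obtain ⟨k, _, rfl⟩ := hx
  obtain ⟨p, _, heq⟩ := hx'
  exact Sum.inl_ne_inr (toLex.injective heq.symm)

/-- classification of downsets of a lex sum over a finite chain -/
lemma downset_lex [Fintype P] [PartialOrder P] {i : ℕ} (D : Finset (Fin i ⊕ₗ P))
    (hD : IsDS D) :
    (∃ a ≤ i, D = prefF i P a) ∨
    (∃ E : Finset P, E.Nonempty ∧ IsDS E ∧ D = fullF i E) := by
  by_cases hp : ∃ p : P, toLex (Sum.inr p) ∈ D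
  · right
    obtain ⟨p₀, hp₀⟩ := hp
    refine ⟨Finset.univ.filter (fun p => toLex (Sum.inr p) ∈ D), ⟨p₀, by simpa using hp₀⟩,
      ?_, ?_⟩
    · intro p q hpmem hq
      simp only [Finset.mem_filter, Finset.mem_univ, true_and] at hpmem ⊢
      exact hD hpmem (Sum.Lex.inr_le_inr_iff.mpr hq)
    · ext x
      rcases hx' : ofLex x with k | p
      · have hx2 : x = toLex (Sum.inl k) := by rw [← hx']; rfl
        subst hx2
        simp only [inl_mem_fullF, iff_true]
        exact hD hp₀ (Sum.Lex.inl_le_inr _ _)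
      · have hx2 : x = toLex (Sum.inr p) := by rw [← hx']; rfl
        subst hx2
        simp [inr_mem_fullF]
  · left
    push_neg at hp
    set K : Finset (Fin i) := Finset.univ.filter (fun k => toLex (Sum.inl k : Fin i ⊕ P) ∈ D)
      with hK
    have hcard : D.card = K.card := by
      refine (Finset.card_bij (fun k _ => toLex (Sum.inl k)) ?_ ?_ ?_).symm
      · intro k hk
        simp only [hK, Finset.mem_filter] at hk
        exact hk.2
      · intro k hk k' hk' heq
        exact Sum.inl.inj (toLex.injective heq)
      · intro x hx
        rcases hx' : ofLex x with k | p
        · have hx2 : x = toLex (Sum.inl k) := by rw [← hx']; rfl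
          subst hx2
          exact ⟨k, by simp [hK, hx], rfl⟩
        · have hx2 : x = toLex (Sum.inr p) := by rw [← hx']; rfl
          subst hx2
          exact absurd hx (hp p)
    refine ⟨D.card, ?_, ?_⟩
    · rw [hcard]
      have := Finset.card_le_univ K
      simpa using this
    · ext x
      rcases hx' : ofLex x with k | p
      · have hx2 : x = toLex (Sum.inl k) := by rw [← hx']; rfl
        subst hx2
        rw [inl_mem_prefF, hcard]
        constructor
        · intro hk
          -- Iic k ⊆ K
          have hsub : Finset.Iic k ⊆ K := by
            intro k' hk'
            simp only [Finset.mem_Iic] at hk'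
            simp only [hK, Finset.mem_filter, Finset.mem_univ, true_and]
            exact hD hk (Sum.Lex.inl_le_inl_iff.mpr hk')
          have h1 := Finset.card_le_card hsub
          rw [Fin.card_Iic] at h1
          omega
        · intro hk
          by_contra hmem
          have hsub : K ⊆ Finset.Iio k := by
            intro k' hk'
            simp only [Finset.mem_Iio]
            simp only [hK, Finset.mem_filter, Finset.mem_univ, true_and] at hk'
            by_contra hge
            push_neg at hge
            exact hmem (hD hk' (Sum.Lex.inl_le_inl_iff.mpr hge))
          have h1 := Finset.card_le_card hsub
          rw [Fin.card_Iio] at h1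
          omega
      · have hx2 : x = toLex (Sum.inr p) := by rw [← hx']; rfl
        subst hx2
        simp only [inr_mem_prefF, iff_false]
        exact hp p

end Plumb
section Isos

variable {α β γ δ P : Type}

/-- order iso between sums from isos of the parts -/
def OIsumCongr [Preorder α] [Preorder β] [Preorder γ] [Preorder δ]
    (e1 : α ≃o γ) (e2 : β ≃o δ) : (α ⊕ β) ≃o (γ ⊕ δ) :=
  { Equiv.sumCongr e1.toEquiv e2.toEquiv with
    map_rel_iff' := by
      rintro (a | b) (a' | b') <;>
        simp [Sum.inl_le_inl_iff, Sum.inr_le_inr_iff, Sum.not_inl_le_inr, Sum.not_inr_le_inl,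
          e1.map_rel_iff, e2.map_rel_iff] }

/-- order iso between lex sums from isos of the parts -/
def OIlexCongr [Preorder α] [Preorder β] [Preorder γ] [Preorder δ]
    (e1 : α ≃o γ) (e2 : β ≃o δ) : (α ⊕ₗ β) ≃o (γ ⊕ₗ δ) where
  toFun z := toLex (Sum.map e1 e2 (ofLex z))
  invFun z := toLex (Sum.map e1.symm e2.symm (ofLex z))
  left_inv z := by
    rcases hz : ofLex z with a | b
    · have hz2 : z = toLex (Sum.inl a) := by rw [← hz]; rfl
      subst hz2; simp [Sum.map]
    · have hz2 : z = toLex (Sum.inr b) := by rw [← hz]; rfl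
      subst hz2; simp [Sum.map]
  right_inv z := by
    rcases hz : ofLex z with a | b
    · have hz2 : z = toLex (Sum.inl a) := by rw [← hz]; rfl
      subst hz2; simp [Sum.map]
    · have hz2 : z = toLex (Sum.inr b) := by rw [← hz]; rfl
      subst hz2; simp [Sum.map]
  map_rel_iff' := by
    intro z w
    rcases hz : ofLex z with a | b <;> rcases hw : ofLex w with a' | b'
    all_goals {
      first
      | (have hz2 : z = toLex (Sum.inl a) := by rw [← hz]; rfl)
      | (have hz2 : z = toLex (Sum.inr b) := by rw [← hz]; rfl)
      first
      | (have hw2 : w = toLex (Sum.inl a') := by rw [← hw]; rfl)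
      | (have hw2 : w = toLex (Sum.inr b') := by rw [← hw]; rfl)
      subst hz2; subst hw2
      simp only [Equiv.coe_fn_mk, ofLex_toLex, Sum.map_inl, Sum.map_inr]
      first
      | (rw [Sum.Lex.inl_le_inl_iff, Sum.Lex.inl_le_inl_iff]; exact e1.le_iff_le)
      | (rw [Sum.Lex.inr_le_inr_iff, Sum.Lex.inr_le_inr_iff]; exact e2.le_iff_le)
      | (exact iff_of_true (Sum.Lex.inl_le_inr _ _) (Sum.Lex.inl_le_inr _ _))
      | (exact iff_of_false Sum.Lex.not_inr_le_inl Sum.Lex.not_inr_le_inl) }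

/-- the subposet on a chain prefix is a chain -/
noncomputable def prefIso [PartialOrder P] [Fintype P] {i a : ℕ} (h : a ≤ i) :
    Fin a ≃o {x : Fin i ⊕ₗ P // x ∈ prefF i P a} := by
  refine
    { toEquiv := Equiv.ofBijective
        (fun j => ⟨toLex (Sum.inl (Fin.castLE h j)), inl_mem_prefF.mpr j.2⟩) ⟨?_, ?_⟩
      map_rel_iff' := ?_ }
  · intro j j' hj
    have hv := congrArg Subtype.val hj
    simp only at hv
    exact Fin.castLE_injective h (Sum.inl.inj (toLex.injective hv))
  · rintro ⟨x, hx⟩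
    rcases hx' : ofLex x with k | p
    · have hx2 : x = toLex (Sum.inl k) := by rw [← hx']; rfl
      subst hx2
      rw [inl_mem_prefF] at hx
      refine ⟨⟨k.1, hx⟩, Subtype.ext ?_⟩
      show toLex (Sum.inl (Fin.castLE h ⟨k.1, hx⟩)) = toLex (Sum.inl k)
      rfl
    · have hx2 : x = toLex (Sum.inr p) := by rw [← hx']; rfl
      subst hx2
      rw [inr_mem_prefF] at hx
      exact hx.elim
  · intro j j'
    show (⟨toLex (Sum.inl (Fin.castLE h j)), _⟩ :
        {x : Fin i ⊕ₗ P // x ∈ prefF i P a}) ≤ ⟨toLex (Sum.inl (Fin.castLE h j')), _⟩ ↔ j ≤ j'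
    rw [Subtype.mk_le_mk, Sum.Lex.inl_le_inl_iff]
    exact Iff.rfl

/-- the subposet on the full chain plus a downset of the top -/
noncomputable def fullIso [PartialOrder P] [Fintype P] {i : ℕ} (E : Finset P) :
    (Fin i ⊕ₗ {p : P // p ∈ E}) ≃o {x : Fin i ⊕ₗ P // x ∈ fullF i E} := by
  refine
    { toEquiv := Equiv.ofBijective
        (fun z => (ofLex z).elim (fun k => ⟨toLex (Sum.inl k), inl_mem_fullF⟩)
          (fun q => ⟨toLex (Sum.inr q.1), inr_mem_fullF.mpr q.2⟩)) ⟨?_, ?_⟩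
      map_rel_iff' := ?_ }
  · intro z z' hz
    rcases hz1 : ofLex z with k | q
    · have e1 : z = toLex (Sum.inl k) := by rw [← hz1]; rfl
      subst e1
      rcases hz2 : ofLex z' with k' | q'
      · have e2 : z' = toLex (Sum.inl k') := by rw [← hz2]; rfl
        subst e2
        simp only [ofLex_toLex, Sum.elim_inl, Subtype.mk.injEq] at hz
        cases Sum.inl.inj (toLex.injective hz); rfl
      · have e2 : z' = toLex (Sum.inr q') := by rw [← hz2]; rfl
        subst e2
        simp only [ofLex_toLex, Sum.elim_inl, Sum.elim_inr, Subtype.mk.injEq] at hz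
        exact absurd (toLex.injective hz) Sum.inl_ne_inr
    · have e1 : z = toLex (Sum.inr q) := by rw [← hz1]; rfl
      subst e1
      rcases hz2 : ofLex z' with k' | q'
      · have e2 : z' = toLex (Sum.inl k') := by rw [← hz2]; rfl
        subst e2
        simp only [ofLex_toLex, Sum.elim_inl, Sum.elim_inr, Subtype.mk.injEq] at hz
        exact absurd (toLex.injective hz) Sum.inr_ne_inl
      · have e2 : z' = toLex (Sum.inr q') := by rw [← hz2]; rfl
        subst e2
        simp only [ofLex_toLex, Sum.elim_inr, Subtype.mk.injEq] at hz
        rw [show q = q' from Subtype.ext (Sum.inr.inj (toLex.injective hz))]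
  · rintro ⟨x, hx⟩
    rcases hx' : ofLex x with k | p
    · have hx2 : x = toLex (Sum.inl k) := by rw [← hx']; rfl
      subst hx2
      exact ⟨toLex (Sum.inl k), rfl⟩
    · have hx2 : x = toLex (Sum.inr p) := by rw [← hx']; rfl
      subst hx2
      rw [inr_mem_fullF] at hx
      exact ⟨toLex (Sum.inr ⟨p, hx⟩), rfl⟩
  · intro z w
    rcases hz : ofLex z with k | q <;> rcases hw : ofLex w with k' | q'
    all_goals {
      first
      | (have hz2 : z = toLex (Sum.inl k) := by rw [← hz]; rfl)
      | (have hz2 : z = toLex (Sum.inr q) := by rw [← hz]; rfl)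
      first
      | (have hw2 : w = toLex (Sum.inl k') := by rw [← hw]; rfl)
      | (have hw2 : w = toLex (Sum.inr q') := by rw [← hw]; rfl)
      subst hz2; subst hw2
      show (⟨_, _⟩ : {x // x ∈ fullF i E}) ≤ ⟨_, _⟩ ↔ _
      rw [Subtype.mk_le_mk]
      first
      | (rw [Sum.Lex.inl_le_inl_iff, Sum.Lex.inl_le_inl_iff])
      | (rw [Sum.Lex.inr_le_inr_iff, Sum.Lex.inr_le_inr_iff]; exact Subtype.coe_le_coe)
      | (exact iff_of_true (Sum.Lex.inl_le_inr _ _) (Sum.Lex.inl_le_inr _ _))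
      | (exact iff_of_false Sum.Lex.not_inr_le_inl Sum.Lex.not_inr_le_inl) }

/-- subposet on univ -/
def univIso (Q : FinPartOrd.{0}) : ↥(subposet Q Finset.univ) ≃o ↥Q :=
  { toEquiv := Equiv.subtypeUnivEquiv (fun x => Finset.mem_univ x)
    map_rel_iff' := Iff.rfl }

lemma conn_fin {a : ℕ} (h : 0 < a) : Conn (Fin a) :=
  ⟨⟨⟨0, h⟩⟩, fun x y => Relation.ReflTransGen.single (le_total x y)⟩

lemma lex_bot_le [PartialOrder P] {i : ℕ} (h : 0 < i) (z : Fin i ⊕ₗ P) :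
    toLex (Sum.inl (⟨0, h⟩ : Fin i)) ≤ z := by
  rcases hz : ofLex z with k | p
  · have hz2 : z = toLex (Sum.inl k) := by rw [← hz]; rfl
    subst hz2
    exact Sum.Lex.inl_le_inl_iff.mpr (by simp [Fin.le_def])
  · have hz2 : z = toLex (Sum.inr p) := by rw [← hz]; rfl
    subst hz2
    exact Sum.Lex.inl_le_inr _ _

lemma conn_lex [PartialOrder P] {i : ℕ} (h : 0 < i) : Conn (Fin i ⊕ₗ P) := by
  refine ⟨⟨toLex (Sum.inl ⟨0, h⟩)⟩, fun x y => ?_⟩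
  exact Relation.ReflTransGen.head (Or.inr (lex_bot_le h x))
    (Relation.ReflTransGen.single (Or.inl (lex_bot_le h y)))

lemma card_lex [Fintype P] {i : ℕ} : Fintype.card (Fin i ⊕ₗ P) = i + Fintype.card P := by
  rw [Fintype.card_congr (ofLex : Fin i ⊕ₗ P ≃ Fin i ⊕ P), Fintype.card_sum, Fintype.card_fin]

end Isos
section Canon

variable {α β P : Type}

def setCongrIso {α : Type} [Preorder α] {s t : Finset α} (h : s = t) :
    {x // x ∈ s} ≃o {x // x ∈ t} := by subst h; exact OrderIso.refl _

/-- canonical class of type A -/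
noncomputable def gA (i m : ℕ) : UPoset → UPoset :=
  Quotient.lift (fun E : FinPartOrd.{0} =>
    cls (FinPartOrd.of ((Fin i ⊕ₗ ↥E) ⊕ Fin (m + 1 - size E))))
    (by
      rintro E E' ⟨e⟩
      have hsz : size E = size E' := Fintype.card_congr e.toEquiv
      apply Quotient.sound
      exact ⟨OIsumCongr (OIlexCongr (OrderIso.refl _) e) (Fin.castOrderIso (by rw [hsz]))⟩)

lemma gA_cls (i m : ℕ) (E : FinPartOrd.{0}) :
    gA i m (cls E) = cls (FinPartOrd.of ((Fin i ⊕ₗ ↥E) ⊕ Fin (m + 1 - size E))) := rfl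

/-- canonical class of type B -/
noncomputable def gB (n a : ℕ) : UPoset := cls (FinPartOrd.of (Fin a ⊕ Fin (n - a)))

lemma isDownset_iff (Q : FinPartOrd.{0}) (D : Finset ↥Q) : IsDownset Q D ↔ IsDS D := Iff.rfl

lemma DAllSet_rep {X : FinPartOrd.{0}} {c : UPoset} (hc : c ∈ DAllSet X) :
    ∃ F : FinPartOrd.{0}, c = cls F ∧ 1 ≤ size F ∧ size F ≤ size X := by
  obtain ⟨D, hD, hne, hcls⟩ := hc
  refine ⟨subposet X D, hcls.symm, ?_, ?_⟩
  · rw [size_subposet]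
    exact Finset.card_pos.mpr hne
  · rw [size_subposet]
    exact (Finset.card_le_univ D).trans_eq (Finset.card_univ.trans rfl)

/-- combine downsets of the two components -/
noncomputable def mkD [Fintype α] [Fintype β] (DL : Finset α) (DR : Finset β) :
    Finset (α ⊕ β) := DL.image Sum.inl ∪ DR.image Sum.inr

lemma leftPart_mkD [Fintype α] [Fintype β] (DL : Finset α) (DR : Finset β) :
    leftPart (mkD DL DR) = DL := by
  ext a
  simp only [mem_leftPart, mkD, Finset.mem_union, Finset.mem_image]
  constructor
  · rintro (⟨a', ha', heq⟩ | ⟨b, hb, heq⟩)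
    · cases Sum.inl.inj heq; exact ha'
    · exact absurd heq Sum.inr_ne_inl
  · intro h; exact Or.inl ⟨a, h, rfl⟩

lemma rightPart_mkD [Fintype α] [Fintype β] (DL : Finset α) (DR : Finset β) :
    rightPart (mkD DL DR) = DR := by
  ext b
  simp only [mem_rightPart, mkD, Finset.mem_union, Finset.mem_image]
  constructor
  · rintro (⟨a', ha', heq⟩ | ⟨b', hb', heq⟩)
    · exact absurd heq Sum.inl_ne_inr
    · cases Sum.inr.inj heq; exact hb'
  · intro h; exact Or.inr ⟨b, h, rfl⟩

lemma isDS_of_parts [Fintype α] [Fintype β] [PartialOrder α] [PartialOrder β]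
    {D : Finset (α ⊕ β)} (hL : IsDS (leftPart D)) (hR : IsDS (rightPart D)) : IsDS D := by
  rintro (a | b) (a' | b') hx hxy
  · have := hL (mem_leftPart.mpr hx) (Sum.inl_le_inl_iff.mp hxy)
    exact mem_leftPart.mp this
  · exact absurd hxy Sum.not_inr_le_inl
  · exact absurd hxy Sum.not_inl_le_inr
  · have := hR (mem_rightPart.mpr hx) (Sum.inr_le_inr_iff.mp hxy)
    exact mem_rightPart.mp this

end Canon
section Shapes

variable {i : ℕ}

lemma cls_shape_prefpref (P₀ R₀ : FinPartOrd.{0}) {a b : ℕ} (ha : a ≤ i) (hb : b ≤ i)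
    (D : Finset ((Fin i ⊕ₗ ↥P₀) ⊕ (Fin i ⊕ₗ ↥R₀)))
    (hL : leftPart D = prefF i ↥P₀ a) (hR : rightPart D = prefF i ↥R₀ b) :
    Nonempty (↥(subposet (PRposet P₀ R₀ i) D) ≃o (Fin a ⊕ Fin b)) :=
  ⟨(sumSplitIso D).symm.trans (OIsumCongr
      ((setCongrIso hL).trans (prefIso ha).symm)
      ((setCongrIso hR).trans (prefIso hb).symm))⟩

lemma cls_shape_fullpref (P₀ R₀ : FinPartOrd.{0}) {b : ℕ} (hb : b ≤ i) (E : Finset ↥P₀)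
    (D : Finset ((Fin i ⊕ₗ ↥P₀) ⊕ (Fin i ⊕ₗ ↥R₀)))
    (hL : leftPart D = fullF i E) (hR : rightPart D = prefF i ↥R₀ b) :
    Nonempty (↥(subposet (PRposet P₀ R₀ i) D) ≃o
      ((Fin i ⊕ₗ {p : ↥P₀ // p ∈ E}) ⊕ Fin b)) :=
  ⟨(sumSplitIso D).symm.trans (OIsumCongr
      ((setCongrIso hL).trans (fullIso E).symm)
      ((setCongrIso hR).trans (prefIso hb).symm))⟩

lemma cls_shape_preffull (P₀ R₀ : FinPartOrd.{0}) {a : ℕ} (ha : a ≤ i) (E : Finset ↥R₀)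
    (D : Finset ((Fin i ⊕ₗ ↥P₀) ⊕ (Fin i ⊕ₗ ↥R₀)))
    (hL : leftPart D = prefF i ↥P₀ a) (hR : rightPart D = fullF i E) :
    Nonempty (↥(subposet (PRposet P₀ R₀ i) D) ≃o
      ((Fin i ⊕ₗ {p : ↥R₀ // p ∈ E}) ⊕ Fin a)) :=
  ⟨((sumSplitIso D).symm.trans (OIsumCongr
      ((setCongrIso hL).trans (prefIso ha).symm)
      ((setCongrIso hR).trans (fullIso E).symm))).trans (OrderIso.sumComm _ _)⟩

end Shapes
section DSetEq

lemma DSet_PR_eq (m i : ℕ) (P₀ R₀ : FinPartOrd.{0}) (hP : size P₀ = m) (hR : size R₀ = m)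
    (hi : m < i) :
    DSet (m + i + 1) (PRposet P₀ R₀ i) =
      (gA i m) '' (DAllSet P₀ ∪ DAllSet R₀) ∪
      (gB (m + i + 1)) '' ↑(Finset.Icc (m + 1) ((m + i + 1) / 2)) := by
  have hmP : Fintype.card ↥P₀ = m := hP
  have hmR : Fintype.card ↥R₀ = m := hR
  ext u
  constructor
  · rintro ⟨D, hD, hcard, rfl⟩
    have hD' : IsDS (α := (Fin i ⊕ₗ ↥P₀) ⊕ (Fin i ⊕ₗ ↥R₀)) D := hD
    have hsplit := card_split (α := Fin i ⊕ₗ ↥P₀) (β := Fin i ⊕ₗ ↥R₀) (D : Finset ((Fin i ⊕ₗ ↥P₀) ⊕ (Fin i ⊕ₗ ↥R₀)))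
    replace hsplit := hcard.symm.trans hsplit
    rcases downset_lex _ (isDS_leftPart hD') with ⟨a, ha, hLa⟩ | ⟨EL, hELne, hELds, hLE⟩ <;>
      rcases downset_lex _ (isDS_rightPart hD') with ⟨b, hb, hRb⟩ | ⟨ER, hERne, hERds, hRE⟩
    · -- pref / pref
      replace hsplit : m + i + 1 = _ + _ := hsplit.trans (congrArg₂ (· + ·) ((congrArg Finset.card hLa).trans (card_prefF ha)) ((congrArg Finset.card hRb).trans (card_prefF hb)))
      right
      obtain ⟨S⟩ := cls_shape_prefpref P₀ R₀ ha hb D hLa hRb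
      by_cases hab : a ≤ b
      · refine ⟨a, by simp only [Finset.coe_Icc, Set.mem_Icc]; omega, ?_⟩
        have hna : m + i + 1 - a = b := by omega
        rw [gB, hna]
        exact cls_eq_iff.mpr ⟨S.symm⟩
      · refine ⟨b, by simp only [Finset.coe_Icc, Set.mem_Icc]; omega, ?_⟩
        have hnb : m + i + 1 - b = a := by omega
        rw [gB, hnb]
        exact cls_eq_iff.mpr ⟨(S.trans (OrderIso.sumComm _ _)).symm⟩
    · -- pref / full
      replace hsplit : m + i + 1 = _ + _ := hsplit.trans (congrArg₂ (· + ·) ((congrArg Finset.card hLa).trans (card_prefF ha)) ((congrArg Finset.card hRE).trans card_fullF))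
      have hER1 : 1 ≤ ER.card := Finset.card_pos.mpr hERne
      have hERm : ER.card ≤ m := by
        have := Finset.card_le_univ ER
        omega
      left
      refine ⟨cls (subposet R₀ ER), Or.inr ⟨ER, hERds, hERne, rfl⟩, ?_⟩
      obtain ⟨S⟩ := cls_shape_preffull P₀ R₀ ha ER D hLa hRE
      rw [gA_cls, size_subposet]
      have hb' : m + 1 - ER.card = a := by omega
      rw [hb']
      exact cls_eq_iff.mpr ⟨S.symm⟩
    · -- full / pref
      replace hsplit : m + i + 1 = _ + _ := hsplit.trans (congrArg₂ (· + ·) ((congrArg Finset.card hLE).trans card_fullF) ((congrArg Finset.card hRb).trans (card_prefF hb)))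
      have hEL1 : 1 ≤ EL.card := Finset.card_pos.mpr hELne
      have hELm : EL.card ≤ m := by
        have := Finset.card_le_univ EL
        omega
      left
      refine ⟨cls (subposet P₀ EL), Or.inl ⟨EL, hELds, hELne, rfl⟩, ?_⟩
      obtain ⟨S⟩ := cls_shape_fullpref P₀ R₀ hb EL D hLE hRb
      rw [gA_cls, size_subposet]
      have hb' : m + 1 - EL.card = b := by omega
      rw [hb']
      exact cls_eq_iff.mpr ⟨S.symm⟩
    · -- full / full : impossible
      exfalso
      replace hsplit : m + i + 1 = _ + _ := hsplit.trans (congrArg₂ (· + ·) ((congrArg Finset.card hLE).trans card_fullF) ((congrArg Finset.card hRE).trans card_fullF))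
      have hEL1 : 1 ≤ EL.card := Finset.card_pos.mpr hELne
      have hER1 : 1 ≤ ER.card := Finset.card_pos.mpr hERne
      omega
  · rintro (⟨c, hc, rfl⟩ | ⟨a, ha, rfl⟩)
    · rcases hc with hcP | hcR
      · obtain ⟨E, hE, hEne, rfl⟩ := hcP
        have hE1 : 1 ≤ E.card := Finset.card_pos.mpr hEne
        have hEm : E.card ≤ m := by
          have := Finset.card_le_univ E
          omega
        have hb : m + 1 - E.card ≤ i := by omega
        set D : Finset ((Fin i ⊕ₗ ↥P₀) ⊕ (Fin i ⊕ₗ ↥R₀)) :=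
          mkD (fullF i E) (prefF i ↥R₀ (m + 1 - E.card)) with hDdef
        have hLD := leftPart_mkD (fullF i E) (prefF i ↥R₀ (m + 1 - E.card))
        have hRD := rightPart_mkD (fullF i E) (prefF i ↥R₀ (m + 1 - E.card))
        refine ⟨D, ?_, ?_, ?_⟩
        · refine (isDownset_iff (PRposet P₀ R₀ i) D).mpr ?_
          refine isDS_of_parts (D := D) ?_ ?_
          · rw [hLD]; exact isDS_fullF hE
          · rw [hRD]; exact isDS_prefF
        · show Finset.card (D : Finset ((Fin i ⊕ₗ ↥P₀) ⊕ (Fin i ⊕ₗ ↥R₀))) = _; rw [card_split D, hLD, hRD, card_fullF, card_prefF hb]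
          omega
        · obtain ⟨S⟩ := cls_shape_fullpref P₀ R₀ hb E D hLD hRD
          rw [gA_cls, size_subposet]
          exact cls_eq_iff.mpr ⟨S⟩
      · obtain ⟨E, hE, hEne, rfl⟩ := hcR
        have hE1 : 1 ≤ E.card := Finset.card_pos.mpr hEne
        have hEm : E.card ≤ m := by
          have := Finset.card_le_univ E
          omega
        have hb : m + 1 - E.card ≤ i := by omega
        set D : Finset ((Fin i ⊕ₗ ↥P₀) ⊕ (Fin i ⊕ₗ ↥R₀)) :=
          mkD (prefF i ↥P₀ (m + 1 - E.card)) (fullF i E) with hDdef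
        have hLD := leftPart_mkD (prefF i ↥P₀ (m + 1 - E.card)) (fullF i E)
        have hRD := rightPart_mkD (prefF i ↥P₀ (m + 1 - E.card)) (fullF i E)
        refine ⟨D, ?_, ?_, ?_⟩
        · refine (isDownset_iff (PRposet P₀ R₀ i) D).mpr ?_
          refine isDS_of_parts (D := D) ?_ ?_
          · rw [hLD]; exact isDS_prefF
          · rw [hRD]; exact isDS_fullF hE
        · show Finset.card (D : Finset ((Fin i ⊕ₗ ↥P₀) ⊕ (Fin i ⊕ₗ ↥R₀))) = _; rw [card_split D, hLD, hRD, card_fullF, card_prefF hb]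
          omega
        · obtain ⟨S⟩ := cls_shape_preffull P₀ R₀ hb E D hLD hRD
          rw [gA_cls, size_subposet]
          exact cls_eq_iff.mpr ⟨S⟩
    · simp only [Finset.coe_Icc, Set.mem_Icc] at ha
      have ha' : a ≤ i := by omega
      have hb' : m + i + 1 - a ≤ i := by omega
      set D : Finset ((Fin i ⊕ₗ ↥P₀) ⊕ (Fin i ⊕ₗ ↥R₀)) :=
        mkD (prefF i ↥P₀ a) (prefF i ↥R₀ (m + i + 1 - a)) with hDdef
      have hLD := leftPart_mkD (prefF i ↥P₀ a) (prefF i ↥R₀ (m + i + 1 - a))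
      have hRD := rightPart_mkD (prefF i ↥P₀ a) (prefF i ↥R₀ (m + i + 1 - a))
      refine ⟨D, ?_, ?_, ?_⟩
      · refine (isDownset_iff (PRposet P₀ R₀ i) D).mpr ?_
        refine isDS_of_parts (D := D) ?_ ?_
        · rw [hLD]; exact isDS_prefF
        · rw [hRD]; exact isDS_prefF
      · show Finset.card (D : Finset ((Fin i ⊕ₗ ↥P₀) ⊕ (Fin i ⊕ₗ ↥R₀))) = _; rw [card_split D, hLD, hRD, card_prefF ha', card_prefF hb']
        omega
      · obtain ⟨S⟩ := cls_shape_prefpref P₀ R₀ ha' hb' D hLD hRD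
        rw [gB]
        exact cls_eq_iff.mpr ⟨S⟩

end DSetEq
section Count

lemma nonempty_lex {P : Type} [PartialOrder P] {i : ℕ} (h : 0 < i) : Nonempty (Fin i ⊕ₗ P) :=
  ⟨toLex (Sum.inl ⟨0, h⟩)⟩

lemma rep_of_mem_union {P₀ R₀ : FinPartOrd.{0}} {m : ℕ} (hP : size P₀ = m) (hR : size R₀ = m)
    {c : UPoset} (hc : c ∈ DAllSet P₀ ∪ DAllSet R₀) :
    ∃ F : FinPartOrd.{0}, c = cls F ∧ 1 ≤ size F ∧ size F ≤ m := by
  rcases hc with h1 | h1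
  · obtain ⟨F, h2, h3, h4⟩ := DAllSet_rep h1; exact ⟨F, h2, h3, h4.trans_eq hP⟩
  · obtain ⟨F, h2, h3, h4⟩ := DAllSet_rep h1; exact ⟨F, h2, h3, h4.trans_eq hR⟩

lemma gA_injOn {i m : ℕ} {P₀ R₀ : FinPartOrd.{0}} (hP : size P₀ = m) (hR : size R₀ = m)
    (hi : m < i) : Set.InjOn (gA i m) (DAllSet P₀ ∪ DAllSet R₀) := by
  intro c hc c' hc' h
  obtain ⟨F, rfl, hF1, hFm⟩ := rep_of_mem_union hP hR hc
  obtain ⟨F', rfl, hF1', hFm'⟩ := rep_of_mem_union hP hR hc'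
  rw [gA_cls, gA_cls, cls_eq_iff] at h
  obtain ⟨e⟩ := h
  have h0i : 0 < i := by omega
  rcases sum_iso_cases (conn_lex h0i) (conn_fin (by omega)) (nonempty_lex h0i)
      ⟨⟨0, by omega⟩⟩ e with ⟨⟨e1⟩, _⟩ | ⟨⟨e1⟩, _⟩
  · exact cls_eq_iff.mpr (lex_cancel e1)
  · exfalso
    have hcards := Fintype.card_congr e1.toEquiv
    rw [card_lex, Fintype.card_fin] at hcards
    have hsz : Fintype.card ↥F = size F := rfl
    omega

lemma gB_injOn {i m : ℕ} (hi : m < i) :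
    Set.InjOn (gB (m + i + 1)) ↑(Finset.Icc (m + 1) ((m + i + 1) / 2)) := by
  intro a ha a' ha' h
  simp only [Finset.coe_Icc, Set.mem_Icc] at ha ha'
  rw [gB, gB, cls_eq_iff] at h
  obtain ⟨e⟩ := h
  rcases sum_iso_cases (conn_fin (by omega)) (conn_fin (by omega)) ⟨⟨0, by omega⟩⟩
      ⟨⟨0, by omega⟩⟩ e.symm with ⟨⟨e1⟩, _⟩ | ⟨⟨e1⟩, _⟩ <;>
    have hcards := Fintype.card_congr e1.toEquiv <;>
    rw [Fintype.card_fin, Fintype.card_fin] at hcards <;> omega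

lemma gA_gB_disj {i m : ℕ} {P₀ R₀ : FinPartOrd.{0}} (hP : size P₀ = m) (hR : size R₀ = m)
    (hi : m < i) :
    Disjoint ((gA i m) '' (DAllSet P₀ ∪ DAllSet R₀))
      ((gB (m + i + 1)) '' ↑(Finset.Icc (m + 1) ((m + i + 1) / 2))) := by
  rw [Set.disjoint_left]
  rintro u ⟨c, hc, rfl⟩ ⟨a, ha, hEq⟩
  simp only [Finset.coe_Icc, Set.mem_Icc] at ha
  obtain ⟨F, rfl, hF1, hFm⟩ := rep_of_mem_union hP hR hc
  rw [gB, gA_cls, cls_eq_iff] at hEq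
  obtain ⟨e⟩ := hEq
  have h0i : 0 < i := by omega
  rcases sum_iso_cases (conn_lex h0i) (conn_fin (by omega)) ⟨⟨0, by omega⟩⟩
      ⟨⟨0, by omega⟩⟩ e.symm with ⟨⟨e1⟩, _⟩ | ⟨⟨e1⟩, _⟩ <;>
  · have hcards := Fintype.card_congr e1.toEquiv
    rw [card_lex, Fintype.card_fin] at hcards
    have hsz : Fintype.card ↥F = size F := rfl
    omega

lemma finite_DAllSet (X : FinPartOrd.{0}) : (DAllSet X).Finite :=
  Set.Finite.subset (Set.finite_range (fun D : Finset ↥X => cls (subposet X D)))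
    (by rintro c ⟨D, _, _, rfl⟩; exact ⟨D, rfl⟩)

lemma count_PR (m i : ℕ) (P₀ R₀ : FinPartOrd.{0}) (hP : size P₀ = m) (hR : size R₀ = m)
    (hi : m < i) :
    (DSet (m + i + 1) (PRposet P₀ R₀ i)).ncard = CNum P₀ R₀ + (i - m + 1) / 2 := by
  rw [DSet_PR_eq m i P₀ R₀ hP hR hi]
  have hUfin : (DAllSet P₀ ∪ DAllSet R₀).Finite :=
    (finite_DAllSet P₀).union (finite_DAllSet R₀)
  have hIccfin : (↑(Finset.Icc (m + 1) ((m + i + 1) / 2)) : Set ℕ).Finite :=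
    (Finset.Icc _ _).finite_toSet
  rw [Set.ncard_union_eq (gA_gB_disj hP hR hi) (hUfin.image _) (hIccfin.image _),
    Set.ncard_image_of_injOn (gA_injOn hP hR hi), Set.ncard_image_of_injOn (gB_injOn hi),
    Set.ncard_coe_finset, Nat.card_Icc]
  have hIE := Set.ncard_union_add_ncard_inter (DAllSet P₀) (DAllSet R₀)
    (finite_DAllSet P₀) (finite_DAllSet R₀)
  rw [CNum]
  omega

end Count
section Part5

lemma le_inl_isLeft {A B : Type} [LE A] [LE B] {z : A ⊕ B} {w : A}
    (h : z ≤ Sum.inl w) : z.isLeft = true := by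
  cases h; rfl

def restrictIso {α β : Type} [Preorder α] [Preorder β] (e : α ≃o β) (q : β → Prop) :
    {a // q (e a)} ≃o {b // q b} where
  toFun a := ⟨e a.1, a.2⟩
  invFun b := ⟨e.symm b.1, by rw [e.apply_symm_apply]; exact b.2⟩
  left_inv a := Subtype.ext (e.symm_apply_apply a.1)
  right_inv b := Subtype.ext (e.apply_symm_apply b.1)
  map_rel_iff' := by
    intro a a'
    show e a.1 ≤ e a'.1 ↔ a.1 ≤ a'.1
    exact e.le_iff_le

noncomputable def leftSubIsoRev (C D : Type) [Preorder C] [Preorder D] :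
    C ≃o {z : C ⊕ D // z.isLeft = true} := by
  refine
    { toEquiv := Equiv.ofBijective
        (fun c => (⟨Sum.inl c, rfl⟩ : {z : C ⊕ D // z.isLeft = true})) ⟨?_, ?_⟩
      map_rel_iff' := ?_ }
  · intro c c' h
    exact Sum.inl.inj (congrArg Subtype.val h)
  · rintro ⟨(c | d), h⟩
    · exact ⟨c, rfl⟩
    · simp [Sum.isLeft] at h
  · intro c c'
    show (⟨Sum.inl c, _⟩ : {z : C ⊕ D // z.isLeft = true}) ≤ ⟨Sum.inl c', _⟩ ↔ c ≤ c'
    refine Subtype.mk_le_mk.trans ?_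
    exact Sum.inl_le_inl_iff

lemma conn_of_bot {Q : FinPartOrd.{0}} {D : Finset ↥Q} {b : ↥Q} (hb : b ∈ D)
    (hle : ∀ x ∈ D, b ≤ x) : Conn ↥(subposet Q D) := by
  refine ⟨⟨⟨b, hb⟩⟩, fun x y => ?_⟩
  have h1 : (⟨b, hb⟩ : ↥(subposet Q D)) ≤ x := hle x.1 x.2
  have h2 : (⟨b, hb⟩ : ↥(subposet Q D)) ≤ y := hle y.1 y.2
  exact Relation.ReflTransGen.head (Or.inr h1) (Relation.ReflTransGen.single (Or.inl h2))

lemma not_conn_sum {A B : Type} [PartialOrder A] [PartialOrder B] [Fintype A] [Fintype B]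
    {D : Finset (A ⊕ B)} (ha : (leftPart D).Nonempty) (hb : (rightPart D).Nonempty) :
    ¬ Conn {x : A ⊕ B // x ∈ D} := by
  rintro ⟨_, hc⟩
  obtain ⟨a, haD⟩ := ha
  obtain ⟨b, hbD⟩ := hb
  have hpath := hc ⟨Sum.inl a, mem_leftPart.mp haD⟩ ⟨Sum.inr b, mem_rightPart.mp hbD⟩
  have hlift := Relation.ReflTransGen.lift (p := fun u v : A ⊕ B => u ≤ v ∨ v ≤ u)
    (fun z : {x : A ⊕ B // x ∈ D} => z.1) (fun u v (huv : u ≤ v ∨ v ≤ u) => huv) _ _ hpath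
  have := rtg_side hlift
  simp at this

lemma big_part {Q : FinPartOrd.{0}} {A : Type} [PartialOrder A] [Fintype A] {i r : ℕ}
    (h0i : 0 < i) (X : Finset ↥Q) (hX : IsDS X)
    (e : ↥(subposet Q X) ≃o ((Fin i ⊕ₗ A) ⊕ Fin r)) :
    ∃ (B : Finset ↥Q) (b : ↥Q),
      IsDS B ∧ B ⊆ X ∧ B.card = i + Fintype.card A ∧ b ∈ B ∧ (∀ x ∈ B, b ≤ x) ∧
      Nonempty (↥(subposet Q B) ≃o (Fin i ⊕ₗ A)) := by
  classical
  set B : Finset ↥Q :=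
    Finset.univ.filter (fun x => ∃ h : x ∈ X, (e ⟨x, h⟩).isLeft = true) with hBdef
  have memB : ∀ x : ↥Q, x ∈ B ↔ ∃ h : x ∈ X, (e ⟨x, h⟩).isLeft = true := by
    intro x; simp [hBdef]
  have hsub : B ⊆ X := fun x hx => ((memB x).mp hx).choose
  have hdsB : IsDS B := by
    intro x y hxB hyx
    obtain ⟨hxX, hxL⟩ := (memB x).mp hxB
    have hyX : y ∈ X := hX hxX hyx
    have hsub' : (⟨y, hyX⟩ : ↥(subposet Q X)) ≤ ⟨x, hxX⟩ := hyx
    have hle := e.le_iff_le.mpr hsub'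
    rcases hw : e ⟨x, hxX⟩ with w | w
    · refine (memB y).mpr ⟨hyX, ?_⟩
      rw [hw] at hle
      exact le_inl_isLeft hle
    · rw [hw] at hxL; simp [Sum.isLeft] at hxL
  set z₀ : (Fin i ⊕ₗ A) ⊕ Fin r := Sum.inl (toLex (Sum.inl ⟨0, h0i⟩)) with hz₀
  set b : ↥Q := (e.symm z₀).1 with hbdef
  have hbB : b ∈ B := by
    refine (memB b).mpr ⟨(e.symm z₀).2, ?_⟩
    show (e (e.symm z₀)).isLeft = true
    rw [OrderIso.apply_symm_apply]
    rfl
  have hble : ∀ x ∈ B, b ≤ x := by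
    intro x hxB
    obtain ⟨hxX, hxL⟩ := (memB x).mp hxB
    rcases hw : e ⟨x, hxX⟩ with w | w
    · have h1 : z₀ ≤ Sum.inl w := Sum.inl_le_inl_iff.mpr (lex_bot_le h0i w)
      have h3 : e.symm (Sum.inl w) = ⟨x, hxX⟩ := by rw [← hw]; exact e.symm_apply_apply _
      have h4 : e.symm z₀ ≤ (⟨x, hxX⟩ : ↥(subposet Q X)) := by
        rw [← h3]
        exact e.symm.le_iff_le.mpr h1
      exact h4
    · rw [hw] at hxL; simp [Sum.isLeft] at hxL
  have isoB : ↥(subposet Q B) ≃o (Fin i ⊕ₗ A) := by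
    let i1 : ↥(subposet Q B) ≃o {w : ↥(subposet Q X) // (e w).isLeft = true} :=
      { toFun := fun x => ⟨⟨x.1, ((memB x.1).mp x.2).choose⟩, ((memB x.1).mp x.2).choose_spec⟩
        invFun := fun w => ⟨w.1.1, (memB w.1.1).mpr ⟨w.1.2, w.2⟩⟩
        left_inv := fun x => Subtype.ext rfl
        right_inv := fun w => Subtype.ext (Subtype.ext rfl)
        map_rel_iff' := Iff.rfl }
    let i2 := restrictIso e (fun z => z.isLeft = true)
    exact (i1.trans i2).trans (leftSubIsoRev (Fin i ⊕ₗ A) (Fin r)).symm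
  refine ⟨B, b, hdsB, hsub, ?_, hbB, hble, ⟨isoB⟩⟩
  rw [← size_subposet Q B]
  show Fintype.card ↥(subposet Q B) = i + Fintype.card A
  exact (Fintype.card_congr isoB.toEquiv).trans card_lex

lemma parts_nonempty {P₀ R₀ : FinPartOrd.{0}} {m i : ℕ} (hP : size P₀ = m) (hR : size R₀ = m)
    (D : Finset ((Fin i ⊕ₗ ↥P₀) ⊕ (Fin i ⊕ₗ ↥R₀))) (hcard : D.card = m + i + 1) :
    (leftPart D).Nonempty ∧ (rightPart D).Nonempty := by
  have hsplit := card_split D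
  have hmP : Fintype.card ↥P₀ = m := hP
  have hmR : Fintype.card ↥R₀ = m := hR
  have h1 : (leftPart D).card ≤ i + m := by
    have h := Finset.card_le_univ (leftPart D)
    rw [card_lex, hmP] at h
    exact h
  have h2 : (rightPart D).card ≤ i + m := by
    have h := Finset.card_le_univ (rightPart D)
    rw [card_lex, hmR] at h
    exact h
  constructor <;> rw [← Finset.card_pos] <;> omega

lemma step_case {m i : ℕ} {P₀ R₀ Q : FinPartOrd.{0}} (hP : size P₀ = m) (hR : size R₀ = m)
    (hW : DSet (m + i + 1) Q = DSet (m + i + 1) (PRposet P₀ R₀ i))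
    {BX BY : Finset ↥Q} {bX bY : ↥Q} {z : ↥Q}
    (hdsX : IsDS BX) (hdsY : IsDS BY) (hcX : BX.card = i + m)
    (hbX : bX ∈ BX) (hbXle : ∀ x ∈ BX, bX ≤ x)
    (hbYle : ∀ x ∈ BY, bY ≤ x)
    (hzX : z ∈ BX) (hzY : z ∈ BY) (hns : ¬ BY ⊆ BX) : False := by
  have hne : (BY \ BX).Nonempty := by
    rw [Finset.sdiff_nonempty]; exact hns
  obtain ⟨w, hwmem, hwmin⟩ : ∃ w ∈ BY \ BX, ∀ y ∈ BY \ BX, ¬ y < w := by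
    obtain ⟨w, hw1, hw2⟩ := Finset.exists_minimal hne
    exact ⟨w, hw1, fun y hy hlt => hlt.not_ge (hw2 hy hlt.le)⟩
  have hwY : w ∈ BY := (Finset.mem_sdiff.mp hwmem).1
  have hwX : w ∉ BX := (Finset.mem_sdiff.mp hwmem).2
  set D' := insert w BX with hD'
  have hds' : IsDS D' := by
    intro x y hx hyx
    rcases Finset.mem_insert.mp hx with rfl | hxB
    · by_cases hyB : y ∈ BX
      · exact Finset.mem_insert_of_mem hyB
      · have hyY : y ∈ BY := hdsY hwY hyx
        rcases hyx.lt_or_eq with hlt | heq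
        · exact absurd hlt (hwmin y (Finset.mem_sdiff.mpr ⟨hyY, hyB⟩))
        · rw [heq]; exact Finset.mem_insert_self _ _
    · exact Finset.mem_insert_of_mem (hdsX hxB hyx)
  have hcard' : D'.card = m + i + 1 := by
    rw [hD', Finset.card_insert_of_notMem hwX, hcX]
    omega
  have hbXw : bX ≤ w := by
    have hbY_in_BX : bY ∈ BX := hdsX hzX (hbYle z hzY)
    exact (hbXle bY hbY_in_BX).trans (hbYle w hwY)
  have hble' : ∀ x ∈ D', bX ≤ x := by
    intro x hx
    rcases Finset.mem_insert.mp hx with rfl | hxB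
    · exact hbXw
    · exact hbXle x hxB
  have hbXD' : bX ∈ D' := Finset.mem_insert_of_mem hbX
  have hconn := conn_of_bot hbXD' hble'
  have hmem : cls (subposet Q D') ∈ DSet (m + i + 1) Q := ⟨D', hds', hcard', rfl⟩
  rw [hW] at hmem
  obtain ⟨D, hDds, hDcard, hDcls⟩ := hmem
  obtain ⟨f⟩ := cls_eq_iff.mp hDcls
  have hconnD : Conn ↥(subposet (PRposet P₀ R₀ i) D) := conn_of_orderIso f.symm hconn
  have hparts := parts_nonempty hP hR D hDcard
  exact not_conn_sum hparts.1 hparts.2 hconnD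

lemma witness_lb (m i : ℕ) (P₀ R₀ : FinPartOrd.{0}) (hP : size P₀ = m) (hR : size R₀ = m)
    (hniso : ¬Nonempty (↥P₀ ≃o ↥R₀)) (hi : m < i) (Q : FinPartOrd.{0})
    (hW : IsWitness (m + i + 1) (DSet (m + i + 1) (PRposet P₀ R₀ i)) Q) :
    2 * m + 2 * i ≤ size Q := by
  have h0i : 0 < i := by omega
  have h1i : (1 : ℕ) ≤ i := h0i
  rw [IsWitness] at hW
  have hmP : Fintype.card ↥P₀ = m := hP
  have hmR : Fintype.card ↥R₀ = m := hR
  -- the P-side heavy member of Γ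
  have hPmem : cls (FinPartOrd.of ((Fin i ⊕ₗ ↥P₀) ⊕ Fin 1)) ∈
      DSet (m + i + 1) (PRposet P₀ R₀ i) := by
    set D : Finset ((Fin i ⊕ₗ ↥P₀) ⊕ (Fin i ⊕ₗ ↥R₀)) :=
      mkD (fullF i (Finset.univ : Finset ↥P₀)) (prefF i ↥R₀ 1) with hDdef
    have hLD := leftPart_mkD (fullF i (Finset.univ : Finset ↥P₀)) (prefF i ↥R₀ 1)
    have hRD := rightPart_mkD (fullF i (Finset.univ : Finset ↥P₀)) (prefF i ↥R₀ 1)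
    refine ⟨D, ?_, ?_, ?_⟩
    · refine (isDownset_iff (PRposet P₀ R₀ i) D).mpr ?_
      refine isDS_of_parts (D := D) ?_ ?_
      · rw [hLD]; exact isDS_fullF (fun x y _ _ => Finset.mem_univ y)
      · rw [hRD]; exact isDS_prefF
    · show Finset.card (D : Finset ((Fin i ⊕ₗ ↥P₀) ⊕ (Fin i ⊕ₗ ↥R₀))) = _; rw [card_split D, hLD, hRD, card_fullF, card_prefF h1i, Finset.card_univ, hmP]
      omega
    · obtain ⟨S⟩ := cls_shape_fullpref P₀ R₀ h1i (Finset.univ : Finset ↥P₀) D hLD hRD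
      exact cls_eq_iff.mpr
        ⟨S.trans (OIsumCongr (OIlexCongr (OrderIso.refl (Fin i)) (univIso P₀))
          (OrderIso.refl (Fin 1)))⟩
  have hRmem : cls (FinPartOrd.of ((Fin i ⊕ₗ ↥R₀) ⊕ Fin 1)) ∈
      DSet (m + i + 1) (PRposet P₀ R₀ i) := by
    set D : Finset ((Fin i ⊕ₗ ↥P₀) ⊕ (Fin i ⊕ₗ ↥R₀)) :=
      mkD (prefF i ↥P₀ 1) (fullF i (Finset.univ : Finset ↥R₀)) with hDdef
    have hLD := leftPart_mkD (prefF i ↥P₀ 1) (fullF i (Finset.univ : Finset ↥R₀))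
    have hRD := rightPart_mkD (prefF i ↥P₀ 1) (fullF i (Finset.univ : Finset ↥R₀))
    refine ⟨D, ?_, ?_, ?_⟩
    · refine (isDownset_iff (PRposet P₀ R₀ i) D).mpr ?_
      refine isDS_of_parts (D := D) ?_ ?_
      · rw [hLD]; exact isDS_prefF
      · rw [hRD]; exact isDS_fullF (fun x y _ _ => Finset.mem_univ y)
    · show Finset.card (D : Finset ((Fin i ⊕ₗ ↥P₀) ⊕ (Fin i ⊕ₗ ↥R₀))) = _; rw [card_split D, hLD, hRD, card_fullF, card_prefF h1i, Finset.card_univ, hmR]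
      omega
    · obtain ⟨S⟩ := cls_shape_preffull P₀ R₀ h1i (Finset.univ : Finset ↥R₀) D hLD hRD
      exact cls_eq_iff.mpr
        ⟨S.trans (OIsumCongr (OIlexCongr (OrderIso.refl (Fin i)) (univIso R₀))
          (OrderIso.refl (Fin 1)))⟩
  rw [← hW] at hPmem hRmem
  obtain ⟨X, hXds, hXcard, hXcls⟩ := hPmem
  obtain ⟨Y, hYds, hYcard, hYcls⟩ := hRmem
  obtain ⟨eX⟩ := cls_eq_iff.mp hXcls
  obtain ⟨eY⟩ := cls_eq_iff.mp hYcls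
  obtain ⟨BX, bX, hdsX, hsubX, hcX, hbX, hbXle, ⟨isoX⟩⟩ := big_part h0i X hXds eX
  obtain ⟨BY, bY, hdsY, hsubY, hcY, hbY, hbYle, ⟨isoY⟩⟩ := big_part h0i Y hYds eY
  rw [hmP] at hcX
  rw [hmR] at hcY
  by_cases hzcase : (BX ∩ BY).Nonempty
  · obtain ⟨z, hz⟩ := hzcase
    have hzX := Finset.mem_inter.mp hz |>.1
    have hzY := Finset.mem_inter.mp hz |>.2
    by_cases hYX : BY ⊆ BX
    · by_cases hXY : BX ⊆ BY
      · exfalso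
        have hBeq : BX = BY := Finset.Subset.antisymm hXY hYX
        exact hniso (lex_cancel (isoX.symm.trans ((setCongrIso hBeq).trans isoY)))
      · exact absurd (step_case hP hR hW hdsY hdsX hcY hbY hbYle hbXle hzY hzX hXY) id
    · exact absurd (step_case hP hR hW hdsX hdsY hcX hbX hbXle hbYle hzX hzY hYX) id
  · have hdisj : Disjoint BX BY :=
      Finset.disjoint_iff_inter_eq_empty.mpr (Finset.not_nonempty_iff_eq_empty.mp hzcase)
    have hcup := Finset.card_union_of_disjoint hdisj
    have hle := Finset.card_le_univ (BX ∪ BY)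
    have hszQ : Fintype.card ↥Q = size Q := rfl
    omega

end Part5
/-- For non-isomorphic `P₀`, `R₀` of size `m` and `i > m`, the set
`D_{m+i+1}(P_iR_i)` has the witness `P_iR_i`, has `k = C(P₀R₀) + ⌈(i−m)/2⌉` members of size
`n = m + i + 1`, its smallest witness has size `2m + 2i`, and `2m + 2i > n + k + c` whenever
`i − ⌈(i−m)/2⌉ > 1 + C(P₀R₀) − m + c`. -/
theorem ladder_family (m : ℕ) (P₀ R₀ : FinPartOrd.{0}) (hP : size P₀ = m) (hR : size R₀ = m)
    (hniso : ¬Nonempty (↥P₀ ≃o ↥R₀)) (i : ℕ) (hi : m < i) :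
    IsWitness (m + i + 1) (DSet (m + i + 1) (PRposet P₀ R₀ i)) (PRposet P₀ R₀ i) ∧
      (DSet (m + i + 1) (PRposet P₀ R₀ i)).ncard = CNum P₀ R₀ + (i - m + 1) / 2 ∧
      (∀ x ∈ DSet (m + i + 1) (PRposet P₀ R₀ i), usize x = m + i + 1) ∧
      size (PRposet P₀ R₀ i) = 2 * m + 2 * i ∧
      (∀ Q : FinPartOrd.{0}, IsWitness (m + i + 1) (DSet (m + i + 1) (PRposet P₀ R₀ i)) Q →
        2 * m + 2 * i ≤ size Q) ∧
      ∀ c : ℕ, 1 + CNum P₀ R₀ - m + c < i - (i - m + 1) / 2 →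
        (m + i + 1) + (CNum P₀ R₀ + (i - m + 1) / 2) + c < 2 * m + 2 * i := by
  refine ⟨rfl, count_PR m i P₀ R₀ hP hR hi, ?_, ?_, ?_, ?_⟩
  · rintro x ⟨D, hD, hcard, rfl⟩
    rw [usize_cls, size_subposet, hcard]
  · rw [size_PR, hP, hR]; omega
  · exact fun Q hQ => witness_lb m i P₀ R₀ hP hR hniso hi Q hQ
  · intro c hc; omega
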